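/- Let f: 2^U → ℝ≥0 be submodular with maximum singleton value M = max_x f({x}), let O ⊆ U, A ⊆ U, and suppose x_1, ..., x_r were added to A in order with thresholds τ^{(1)} ≥ τ^{(2)} ≥ ... ≥ τ^{(r)} > 0 satisfying: f(A_{j}) − f(A_{j−1}) ≥ τ^{(j)} for each j (where A_j = A_{j−1} + x_j, A_0 = ∅), and for ε ∈ (0,1) every o ∈ O \ A_r satisfies f(A_r + o) − f(A_r) < τ_min/(1−ε) for some τ_min > 0. If additionally |O| ≤ k and each o ∈ O \ A_{j−1} not in A_r satisfied f(A_{j−1} + o) − f(A_{j−1}) < τ^{(j)}/(1−ε) at the time of addition, then f(O ∪ A_r) − f(A_r) ≤ (f(A_r) − f(A_0))/(1−ε) + k·τ_min/(1−ε). -/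
import Mathlib


/-- Threshold-greedy bound: if the elements of `O` outside the greedy solution were
filtered at thresholds `τ⁽ʲ⁾/(1−ε)` (or below `τ_min/(1−ε)` at the end), then
`f(O ∪ A_r) − f(A_r) ≤ (f(A_r) − f(A_0))/(1−ε) + k·τ_min/(1−ε)`. -/
theorem stmt_17 {U : Type*} [DecidableEq U] [Fintype U]
    (f : Finset U → ℝ)
    (hsub : ∀ X Y : Finset U, f (X ∪ Y) + f (X ∩ Y) ≤ f X + f Y)
    (hnn : ∀ S : Finset U, 0 ≤ f S)
    (ε : ℝ) (hε0 : 0 < ε) (hε1 : ε < 1)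
    (k : ℕ) (hk : 0 < k) (τmin : ℝ) (hτmin : 0 < τmin)
    (r : ℕ) (x : Fin r → U) (A : ℕ → Finset U)
    (hA0 : A 0 = ∅)
    (hAsucc : ∀ j : Fin r, A ((j : ℕ) + 1) = insert (x j) (A (j : ℕ)))
    (hxnew : ∀ j : Fin r, x j ∉ A (j : ℕ))
    (τ : Fin r → ℝ) (hτpos : ∀ j, 0 < τ j)
    (hτmono : ∀ j₁ j₂ : Fin r, j₁ ≤ j₂ → τ j₂ ≤ τ j₁)
    (hτgain : ∀ j : Fin r, τ j ≤ f (A ((j : ℕ) + 1)) - f (A (j : ℕ)))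
    (O : Finset U) (hO : O.card ≤ k)
    (φ : U → Option (Fin r))
    (hφinj : Set.InjOn φ ↑(O \ A r))
    (hφsome : ∀ o ∈ O \ A r, ∀ j : Fin r, φ o = some j →
      f (insert o (A (j : ℕ))) - f (A (j : ℕ)) < τ j / (1 - ε))
    (hφnone : ∀ o ∈ O \ A r, φ o = none →
      f (insert o (A r)) - f (A r) < τmin / (1 - ε)) :
    f (O ∪ A r) - f (A r) ≤ (f (A r) - f (A 0)) / (1 - ε) + (k : ℝ) * τmin / (1 - ε) := by
  classical
  have h1ε : (0:ℝ) < 1 - ε := by linarith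
  -- marginal gains decrease with the set
  have hmarg : ∀ (S T : Finset U) (o : U), S ⊆ T → o ∉ T →
      f (insert o T) - f T ≤ f (insert o S) - f S := by
    intro S T o hST hoT
    have h := hsub (insert o S) T
    have h1 : insert o S ∪ T = insert o T := by
      rw [Finset.insert_union, Finset.union_eq_right.mpr hST]
    have h2 : insert o S ∩ T = S := by
      ext y
      simp only [Finset.mem_inter, Finset.mem_insert]
      constructor
      · rintro ⟨h | h, hT⟩
        · exact absurd (h ▸ hT) hoT
        · exact h
      · intro h; exact ⟨Or.inr h, hST h⟩
    rw [h1, h2] at h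
    linarith
  -- submodular sum bound
  have hsumb : ∀ (T S : Finset U), f (S ∪ T) - f T ≤
      ∑ o ∈ S \ T, (f (insert o T) - f T) := by
    intro T S
    induction S using Finset.induction_on with
    | empty => simp
    | @insert a S ha ih =>
      by_cases haT : a ∈ T
      · have hu : insert a S ∪ T = S ∪ T := by
          rw [Finset.insert_union, Finset.insert_eq_self.mpr (Finset.mem_union_right _ haT)]
        have hd : insert a S \ T = S \ T := Finset.insert_sdiff_of_mem _ haT
        rw [hu, hd]; exact ih
      · have hu : insert a S ∪ T = insert a (S ∪ T) := Finset.insert_union _ _ _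
        have haST : a ∉ S ∪ T := by
          simp only [Finset.mem_union]; tauto
        have hd : insert a S \ T = insert a (S \ T) := by
          rw [Finset.insert_sdiff_of_notMem _ haT]
        have hna : a ∉ S \ T := fun h => ha (Finset.mem_sdiff.mp h).1
        rw [hu, hd, Finset.sum_insert hna]
        have hm := hmarg T (S ∪ T) a Finset.subset_union_right haST
        linarith
  -- the chain A is monotone up to r
  have key : ∀ n j, j + n ≤ r → A j ⊆ A (j + n) := by
    intro n
    induction n with
    | zero => intro j _; simp
    | succ n ih =>
      intro j hj
      have hjn : j + n < r := by omega
      have h1 : A j ⊆ A (j + n) := ih j (by omega)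
      have h2 := hAsucc ⟨j + n, hjn⟩
      simp only at h2
      calc A j ⊆ A (j + n) := h1
        _ ⊆ A (j + n + 1) := by rw [h2]; exact Finset.subset_insert _ _
  have hchain : ∀ j : Fin r, A (j : ℕ) ⊆ A r := by
    intro j
    have := key (r - (j : ℕ)) (j : ℕ) (by omega)
    rwa [Nat.add_sub_cancel' (le_of_lt j.isLt)] at this
  -- bound each marginal by T (φ o)
  set T : Option (Fin r) → ℝ := fun s => s.elim (τmin / (1 - ε)) (fun j => τ j / (1 - ε))
    with hT
  have step2 : ∀ o ∈ O \ A r, f (insert o (A r)) - f (A r) ≤ T (φ o) := by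
    intro o ho
    have hoAr : o ∉ A r := (Finset.mem_sdiff.mp ho).2
    cases hφ : φ o with
    | none => exact le_of_lt (hφnone o ho hφ)
    | some j =>
      calc f (insert o (A r)) - f (A r)
          ≤ f (insert o (A (j : ℕ))) - f (A (j : ℕ)) := hmarg _ _ _ (hchain j) hoAr
        _ ≤ τ j / (1 - ε) := le_of_lt (hφsome o ho j hφ)
  have hTnn : ∀ s : Option (Fin r), 0 ≤ T s := by
    intro s
    cases s with
    | none => exact le_of_lt (div_pos hτmin h1ε)
    | some j => exact le_of_lt (div_pos (hτpos j) h1ε)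
  -- sum over image via injectivity
  have himg : ∑ o ∈ O \ A r, T (φ o) = ∑ s ∈ (O \ A r).image φ, T s := by
    rw [Finset.sum_image]
    intro a ha b hb hab
    exact hφinj (Finset.mem_coe.mpr ha) (Finset.mem_coe.mpr hb) hab
  have hsub2 : ∑ s ∈ (O \ A r).image φ, T s ≤ ∑ s : Option (Fin r), T s :=
    Finset.sum_le_sum_of_subset_of_nonneg (Finset.subset_univ _)
      (fun s _ _ => hTnn s)
  have hopt : ∑ s : Option (Fin r), T s = τmin / (1 - ε) + ∑ j : Fin r, τ j / (1 - ε) := by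
    rw [Fintype.sum_option]; rfl
  -- telescoping
  have htel : ∑ j : Fin r, (f (A ((j : ℕ) + 1)) - f (A (j : ℕ))) = f (A r) - f (A 0) := by
    rw [Fin.sum_univ_eq_sum_range (fun i => f (A (i + 1)) - f (A i))]
    exact Finset.sum_range_sub (fun i => f (A i)) r
  have hτsum : ∑ j : Fin r, τ j ≤ f (A r) - f (A 0) := by
    rw [← htel]
    exact Finset.sum_le_sum (fun j _ => hτgain j)
  have hτdiv : ∑ j : Fin r, τ j / (1 - ε) ≤ (f (A r) - f (A 0)) / (1 - ε) := by
    rw [← Finset.sum_div]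
    gcongr
  have hk1 : (1:ℝ) ≤ (k:ℝ) := by exact_mod_cast hk
  have hkτ : τmin / (1 - ε) ≤ (k : ℝ) * τmin / (1 - ε) := by
    gcongr
    nlinarith
  calc f (O ∪ A r) - f (A r)
      ≤ ∑ o ∈ O \ A r, (f (insert o (A r)) - f (A r)) := hsumb (A r) O
    _ ≤ ∑ o ∈ O \ A r, T (φ o) := Finset.sum_le_sum step2
    _ = ∑ s ∈ (O \ A r).image φ, T s := himg
    _ ≤ ∑ s : Option (Fin r), T s := hsub2
    _ = τmin / (1 - ε) + ∑ j : Fin r, τ j / (1 - ε) := hopt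
    _ ≤ (k : ℝ) * τmin / (1 - ε) + (f (A r) - f (A 0)) / (1 - ε) := by
        exact add_le_add hkτ hτdiv
    _ = (f (A r) - f (A 0)) / (1 - ε) + (k : ℝ) * τmin / (1 - ε) := by ring
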